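/- Let M be a nonempty compact Hausdorff topological space, let m ≥ 1, let ζ₁, …, ζ_m : C(M,ℝ) → ℝ be functionals, and let X₁, …, X_m ⊆ M be nonempty closed subsets that are pairwise disjoint, with X_i superheavy for ζ_i for each i. Then ζ₁, …, ζ_m are linearly independent in the real vector space of all functions from C(M,ℝ) to ℝ: if a₁, …, a_m ∈ ℝ satisfy a₁ζ₁(H) + ⋯ + a_mζ_m(H) = 0 for every H ∈ C(M,ℝ), then a₁ = ⋯ = a_m = 0. -/
import Mathlib


/-- A nonempty closed subset `X` of a compact space `M` is superheavy for a functional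
`ζ : C(M,ℝ) → ℝ` if `inf_{x ∈ X} H x ≤ ζ H ≤ sup_{x ∈ X} H x` for all `H`. -/
def Superheavy {M : Type*} [TopologicalSpace M] (ζ : C(M, ℝ) → ℝ) (X : Set M) : Prop :=
  ∀ H : C(M, ℝ), sInf (H '' X) ≤ ζ H ∧ ζ H ≤ sSup (H '' X)

lemma superheavy_eval {M : Type*} [TopologicalSpace M] {ζ : C(M, ℝ) → ℝ} {X : Set M}
    (hsh : Superheavy ζ X) (hne : X.Nonempty) {H : C(M, ℝ)} {c : ℝ}
    (h : ∀ x ∈ X, H x = c) : ζ H = c := by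
  have himg : H '' X = {c} := by
    apply Set.eq_singleton_iff_nonempty_unique_mem.2
    refine ⟨hne.image _, fun y hy => ?_⟩
    obtain ⟨x, hx, rfl⟩ := hy
    exact h x hx
  have h2 := hsh H
  rw [himg, csInf_singleton, csSup_singleton] at h2
  linarith [h2.1, h2.2]

/-- Functionals with pairwise disjoint nonempty closed superheavy sets are
linearly independent. -/
theorem superheavy_linear_independent {M : Type*} [TopologicalSpace M] [CompactSpace M]
    [T2Space M] [Nonempty M] (m : ℕ) (hm : 1 ≤ m)
    (ζ : Fin m → (C(M, ℝ) → ℝ)) (X : Fin m → Set M)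
    (hne : ∀ i, (X i).Nonempty) (hcl : ∀ i, IsClosed (X i))
    (hdisj : ∀ i j, i ≠ j → Disjoint (X i) (X j))
    (hsh : ∀ i, Superheavy (ζ i) (X i)) :
    ∀ a : Fin m → ℝ, (∀ H : C(M, ℝ), ∑ i, a i * ζ i H = 0) → ∀ i, a i = 0 := by
  intro a hsum i
  set T : Set M := ⋃ j ∈ (Finset.univ.erase i), X j with hT
  have hTcl : IsClosed T := Set.Finite.isClosed_biUnion (Finset.finite_toSet _) fun j _ => hcl j
  have hTdisj : Disjoint T (X i) := by
    refine Set.disjoint_left.2 fun x hx hxi => ?_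
    obtain ⟨j, hj, hxj⟩ := Set.mem_iUnion₂.1 hx
    exact Set.disjoint_left.1 (hdisj j i (Finset.ne_of_mem_erase hj)) hxj hxi
  obtain ⟨H, hH0, hH1, -⟩ := exists_continuous_zero_one_of_isClosed hTcl (hcl i) hTdisj
  have hζi : ζ i H = 1 := superheavy_eval (hsh i) (hne i) fun x hx => hH1 hx
  have hζj : ∀ j, j ≠ i → ζ j H = 0 := by
    intro j hj
    refine superheavy_eval (hsh j) (hne j) fun x hx => hH0 ?_
    exact Set.mem_biUnion (Finset.mem_erase.2 ⟨hj, Finset.mem_univ j⟩) hx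
  have := hsum H
  rw [Finset.sum_eq_single i (fun j _ hj => by rw [hζj j hj, mul_zero])
    (fun h => absurd (Finset.mem_univ i) h)] at this
  rw [hζi, mul_one] at this
  exact this
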